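/- Let Q be an m_ξ-primary ideal with orthogonal primal-dual pair (B, {Λ_0,...,Λ_{δ−1}}) and multiplication operators M_1,...,M_n by (x_i−ξ_i) on ℂ[x]/Q. Then for any p ∈ ℂ[x], the normal form of p satisfies N(p) = p(M)(1) = Σ_{k=0}^{δ−1} Λ_k(p)·(x−ξ)^{α_{k+1}}, where p(M) denotes substituting M_i for (x_i − ξ_i) in the Taylor expansion of p at ξ, applied to the class of 1. -/

import Mathlib

open MvPolynomial

/-- Iterated partial derivative `∂^β` on multivariate polynomials. -/
noncomputable def pd {n : ℕ} {K : Type*} [CommSemiring K] (β : Fin n → ℕ) :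
    Module.End K (MvPolynomial (Fin n) K) :=
  (List.ofFn fun i : Fin n =>
    ((MvPolynomial.pderiv i).toLinearMap : Module.End K (MvPolynomial (Fin n) K)) ^ (β i)).prod

/-- The shifted monomial `(x−ξ)^α`. -/
noncomputable def xm {n : ℕ} (ξ : Fin n → ℂ) (α : Fin n → ℕ) : MvPolynomial (Fin n) ℂ :=
  ∏ i, (X i - C (ξ i)) ^ (α i)

/-- The orthogonal complement `J^⊥` of an ideal in the dual space. -/
noncomputable def perp {n : ℕ} (J : Ideal (MvPolynomial (Fin n) ℂ)) :
    Submodule ℂ (Module.Dual ℂ (MvPolynomial (Fin n) ℂ)) :=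
  (J.restrictScalars ℂ).dualAnnihilator

/-- `M^γ = M_1^{γ_1}···M_n^{γ_n}` where `M_i` is multiplication by the class of
`x_i − ξ_i` on `ℂ[x]/Q`. -/
noncomputable def multPow {n : ℕ} (ξ : Fin n → ℂ) (Q : Ideal (MvPolynomial (Fin n) ℂ))
    (γ : Fin n → ℕ) : Module.End ℂ (MvPolynomial (Fin n) ℂ ⧸ Q) :=
  (List.ofFn fun i : Fin n =>
    (LinearMap.mulLeft ℂ (Ideal.Quotient.mk Q (X i - C (ξ i))) :
      Module.End ℂ (MvPolynomial (Fin n) ℂ ⧸ Q)) ^ (γ i)).prod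

/-! ### Auxiliary lemmas -/

section Aux

variable {n : ℕ}

lemma my_pderiv_comm (i j : Fin n) (p : MvPolynomial (Fin n) ℂ) :
    pderiv i (pderiv j p) = pderiv j (pderiv i p) := by
  induction p using MvPolynomial.induction_on' with
  | monomial u a =>
      rcases eq_or_ne i j with rfl | hij
      · rfl
      · simp only [pderiv_monomial]
        have h1 : (u - Finsupp.single j 1) - Finsupp.single i 1
            = (u - Finsupp.single i 1) - Finsupp.single j 1 := tsub_right_comm
        have h2 : ((u - Finsupp.single j 1 : Fin n →₀ ℕ)) i = u i := by
          rw [Finsupp.tsub_apply, Finsupp.single_apply, if_neg (Ne.symm hij), Nat.sub_zero]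
        have h3 : ((u - Finsupp.single i 1 : Fin n →₀ ℕ)) j = u j := by
          rw [Finsupp.tsub_apply, Finsupp.single_apply, if_neg hij, Nat.sub_zero]
        rw [h1, h2, h3]
        ring_nf
  | add p q hp hq => simp [hp, hq]

lemma list_ofFn_prod_pick {M : Type*} [Monoid M] :
    ∀ {m : ℕ} (f : Fin m → M), (∀ a b, Commute (f a) (f b)) → ∀ i : Fin m,
      (List.ofFn f).prod = (List.ofFn (Function.update f i 1)).prod * f i := by
  intro m
  induction m with
  | zero => exact fun f h i => i.elim0
  | succ m ih =>
      intro f h i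
      rw [List.ofFn_succ, List.ofFn_succ, List.prod_cons, List.prod_cons]
      rcases Fin.eq_zero_or_eq_succ i with rfl | ⟨i', rfl⟩
      · have h1 : (Function.update f 0 1) 0 = 1 := by simp
        have h2 : (fun j : Fin m => Function.update f 0 1 j.succ) = fun j => f j.succ := by
          funext j; simp [Function.update_apply, (Fin.succ_ne_zero j)]
        have hc : Commute (f 0) (List.ofFn fun j : Fin m => f j.succ).prod := by
          apply Commute.list_prod_right
          intro x hx
          rw [List.mem_ofFn] at hx
          obtain ⟨j, rfl⟩ := hx
          exact h 0 _
        rw [h1, h2, one_mul]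
        exact hc.eq
      · have h1 : (Function.update f i'.succ 1) 0 = f 0 := by
          simp [Function.update_apply, (Fin.succ_ne_zero i').symm]
        have h2 : (fun j : Fin m => Function.update f i'.succ 1 j.succ)
            = Function.update (fun j : Fin m => f j.succ) i' 1 := by
          funext j; simp [Function.update_apply, Fin.succ_inj]
        rw [h1, h2, ih (fun j => f j.succ) (fun a b => h _ _) i', mul_assoc]

/-- The partial derivative endomorphism. -/
noncomputable abbrev Ad (i : Fin n) : Module.End ℂ (MvPolynomial (Fin n) ℂ) :=
  (pderiv i).toLinearMap

lemma commute_Ad (i j : Fin n) : Commute (Ad i) (Ad j) :=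
  LinearMap.ext fun p => my_pderiv_comm i j p

lemma pd_split (γ : Fin n → ℕ) (i : Fin n) :
    pd (K := ℂ) γ = pd (Function.update γ i 0) * (Ad i) ^ (γ i) := by
  unfold pd
  have hup : (fun j : Fin n => Ad j ^ (Function.update γ i 0) j)
      = Function.update (fun j => Ad j ^ γ j) i 1 := by
    funext j
    rcases eq_or_ne j i with rfl | hj
    · simp [Function.update_self]
    · simp [Function.update_apply, hj]
  rw [hup]
  exact list_ofFn_prod_pick _ (fun a b => (commute_Ad a b).pow_pow _ _) i

lemma pd_zero_eq_one : pd (K := ℂ) (0 : Fin n → ℕ) = 1 := by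
  unfold pd
  simp only [Pi.zero_apply, pow_zero]
  rw [List.ofFn_const, List.prod_replicate, one_pow]

lemma pd_C_eq_zero (γ : Fin n → ℕ) (hγ : γ ≠ 0) (a : ℂ) :
    pd γ (C a : MvPolynomial (Fin n) ℂ) = 0 := by
  obtain ⟨i, hi⟩ := Function.ne_iff.mp hγ
  rw [pd_split γ i]
  obtain ⟨m, hm⟩ := Nat.exists_eq_succ_of_ne_zero hi
  rw [Module.End.mul_apply, hm, pow_succ, Module.End.mul_apply]
  have : Ad i (C a : MvPolynomial (Fin n) ℂ) = 0 := pderiv_C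
  rw [this, map_zero, map_zero]

lemma Ad_commute_mulLeft {i j : Fin n} (hij : j ≠ i) (c : ℂ) :
    Commute (Ad j) (LinearMap.mulLeft ℂ (X i - C c)) := by
  apply LinearMap.ext
  intro p
  simp only [Module.End.mul_apply, LinearMap.mulLeft_apply, Derivation.coeFn_coe]
  rw [pderiv_mul]
  simp only [map_sub, pderiv_X, pderiv_C, sub_zero]
  rw [Pi.single_eq_of_ne (Ne.symm hij)]
  simp

lemma pd_commute_mulLeft (γ : Fin n → ℕ) (i : Fin n) (hγ : γ i = 0) (c : ℂ) :
    Commute (pd (K := ℂ) γ) (LinearMap.mulLeft ℂ (X i - C c)) := by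
  unfold pd
  apply (Commute.list_prod_right _ _ ?_).symm
  intro x hx
  rw [List.mem_ofFn] at hx
  obtain ⟨j, rfl⟩ := hx
  rcases eq_or_ne j i with rfl | hj
  · show Commute _ (Ad j ^ γ j)
    rw [hγ, pow_zero]
    exact (Commute.one_right _)
  · show Commute _ (Ad j ^ γ j)
    exact ((Ad_commute_mulLeft hj c).symm.pow_right _)

lemma Ad_pow_mulLeft (i : Fin n) (c : ℂ) (k : ℕ) :
    (Ad i) ^ k * LinearMap.mulLeft ℂ (X i - C c)
      = LinearMap.mulLeft ℂ (X i - C c) * (Ad i) ^ k + k • (Ad i) ^ (k - 1) := by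
  have hbase : Ad i * LinearMap.mulLeft ℂ (X i - C c)
      = LinearMap.mulLeft ℂ (X i - C c) * Ad i + 1 := by
    apply LinearMap.ext
    intro p
    simp only [Module.End.mul_apply, LinearMap.add_apply, LinearMap.mulLeft_apply,
      Module.End.one_apply, Derivation.coeFn_coe]
    rw [pderiv_mul]
    simp only [map_sub, pderiv_X_self, pderiv_C, sub_zero, one_mul]
    abel
  induction k with
  | zero => simp
  | succ k ih =>
      rw [pow_succ, mul_assoc, hbase, mul_add, mul_one, ← mul_assoc, ih, add_mul, smul_mul_assoc]
      rcases Nat.eq_zero_or_pos k with rfl | hk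
      · simp
      · have h1 : (Ad i) ^ (k - 1) * Ad i = (Ad i) ^ k := by
          rw [← pow_succ, Nat.sub_add_cancel hk]
        rw [h1, Nat.add_sub_cancel, succ_nsmul, mul_assoc]
        abel

lemma pd_mul_mulLeft (γ : Fin n → ℕ) (i : Fin n) (c : ℂ) :
    pd (K := ℂ) γ * LinearMap.mulLeft ℂ (X i - C c)
      = LinearMap.mulLeft ℂ (X i - C c) * pd γ + (γ i) • pd (γ - Pi.single i 1) := by
  have hupd : Function.update (γ - Pi.single i 1) i 0 = Function.update γ i 0 := by
    funext j
    rcases eq_or_ne j i with rfl | hj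
    · simp
    · simp [Function.update_apply, hj, Pi.single_apply, Pi.sub_apply]
  have hsub_i : ((γ - Pi.single i 1 : Fin n → ℕ)) i = γ i - 1 := by
    simp [Pi.sub_apply, Pi.single_apply]
  rw [pd_split γ i, mul_assoc, Ad_pow_mulLeft, mul_add,
    ← mul_assoc, (pd_commute_mulLeft (Function.update γ i 0) i (by simp) c).eq, mul_assoc,
    ← pd_split γ i]
  congr 1
  rw [mul_smul_comm]
  congr 1
  rw [pd_split (γ - Pi.single i 1) i, hupd, hsub_i]

lemma eval_pd_mul (ξ : Fin n → ℂ) (γ : Fin n → ℕ) (i : Fin n) (p : MvPolynomial (Fin n) ℂ) :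
    eval ξ (pd γ ((X i - C (ξ i)) * p))
      = (γ i) * eval ξ (pd (γ - Pi.single i 1) p) := by
  have h := congrArg (fun L : Module.End ℂ (MvPolynomial (Fin n) ℂ) => eval ξ (L p))
    (pd_mul_mulLeft γ i (ξ i))
  simp only [Module.End.mul_apply, LinearMap.add_apply, LinearMap.mulLeft_apply,
    LinearMap.smul_apply, map_add, map_mul, map_smul] at h
  rw [show eval ξ (X i - C (ξ i)) = 0 by simp, zero_mul, zero_add] at h
  simpa using h

lemma xm_add_single (ξ : Fin n → ℂ) (β : Fin n → ℕ) (i : Fin n) :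
    xm ξ (β + Pi.single i 1) = xm ξ β * (X i - C (ξ i)) := by
  unfold xm
  have h : ∀ j : Fin n, (X j - C (ξ j)) ^ ((β + Pi.single i 1 : Fin n → ℕ) j)
      = (X j - C (ξ j)) ^ (β j) * (X j - C (ξ j)) ^ ((Pi.single i 1 : Fin n → ℕ) j) := by
    intro j
    have hj : ((β + Pi.single i 1 : Fin n → ℕ)) j = β j + (Pi.single i 1 : Fin n → ℕ) j := rfl
    rw [hj, pow_add]
  rw [Finset.prod_congr rfl (fun j _ => h j), Finset.prod_mul_distrib]
  congr 1
  rw [Finset.prod_eq_single i (fun j _ hj => by simp [Pi.single_apply, hj]) (by simp)]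
  simp

lemma xm_mem_pow (ξ : Fin n → ℂ) (γ : Fin n → ℕ) :
    xm ξ γ ∈ (RingHom.ker (eval ξ : MvPolynomial (Fin n) ℂ →+* ℂ)) ^ (∑ i, γ i) := by
  classical
  suffices H : ∀ s : Finset (Fin n), (∏ i ∈ s, (X i - C (ξ i)) ^ (γ i))
      ∈ (RingHom.ker (eval ξ : MvPolynomial (Fin n) ℂ →+* ℂ)) ^ (∑ i ∈ s, γ i) from H _
  intro s
  induction s using Finset.induction_on with
  | empty => simp [Ideal.one_eq_top]
  | @insert a s ha ih =>
      rw [Finset.prod_insert ha, Finset.sum_insert ha, pow_add]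
      apply Ideal.mul_mem_mul _ ih
      apply Ideal.pow_mem_pow
      rw [RingHom.mem_ker]
      simp

/-- The Taylor-sum linear map. -/
noncomputable def taylorMap (ξ : Fin n → ℂ) (Q : Ideal (MvPolynomial (Fin n) ℂ)) (o : ℕ) :
    MvPolynomial (Fin n) ℂ →ₗ[ℂ] (MvPolynomial (Fin n) ℂ ⧸ Q) :=
  ∑ γ ∈ Finset.Iic (fun _ : Fin n => o),
    LinearMap.smulRight
      (((∏ i, ((γ i).factorial : ℂ))⁻¹) •
        ((MvPolynomial.aeval ξ).toLinearMap ∘ₗ (pd γ : Module.End ℂ (MvPolynomial (Fin n) ℂ))))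
      (Ideal.Quotient.mk Q (xm ξ γ))

lemma taylorMap_apply (ξ : Fin n → ℂ) (Q : Ideal (MvPolynomial (Fin n) ℂ)) (o : ℕ)
    (p : MvPolynomial (Fin n) ℂ) :
    taylorMap ξ Q o p = ∑ γ ∈ Finset.Iic (fun _ : Fin n => o),
      ((∏ i, ((γ i).factorial : ℂ))⁻¹ * eval ξ (pd γ p)) • Ideal.Quotient.mk Q (xm ξ γ) := by
  unfold taylorMap
  rw [LinearMap.sum_apply]
  apply Finset.sum_congr rfl
  intro γ _
  rw [LinearMap.smulRight_apply, LinearMap.smul_apply, LinearMap.comp_apply]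
  rw [smul_eq_mul, AlgHom.toLinearMap_apply, ← coe_aeval_eq_eval]
  rfl

end Aux

section Taylor

variable {n : ℕ}

lemma mk_C_mul (Q : Ideal (MvPolynomial (Fin n) ℂ)) (c : ℂ) (q : MvPolynomial (Fin n) ℂ) :
    Ideal.Quotient.mk Q (C c * q) = c • Ideal.Quotient.mk Q q := by
  rw [← smul_eq_C_mul, ← Ideal.Quotient.mkₐ_eq_mk ℂ, map_smul, Ideal.Quotient.mkₐ_eq_mk]

lemma taylor_mod (ξ : Fin n → ℂ) (Q : Ideal (MvPolynomial (Fin n) ℂ)) (o : ℕ)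
    (ho : (RingHom.ker (MvPolynomial.eval ξ)) ^ (o + 1) ≤ Q) (p : MvPolynomial (Fin n) ℂ) :
    Ideal.Quotient.mk Q p = taylorMap ξ Q o p := by
  induction p using MvPolynomial.induction_on with
  | C a =>
      rw [taylorMap_apply]
      rw [Finset.sum_eq_single_of_mem (0 : Fin n → ℕ)
        (Finset.mem_Iic.mpr (fun i => Nat.zero_le o))
        (fun b _ hb => by rw [pd_C_eq_zero b hb a, map_zero, mul_zero, zero_smul])]
      rw [pd_zero_eq_one]
      simp only [Pi.zero_apply, Nat.factorial_zero, Nat.cast_one, Finset.prod_const_one,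
        inv_one, Module.End.one_apply, eval_C, one_mul]
      have hxm : xm ξ (0 : Fin n → ℕ) = 1 := by simp [xm]
      rw [hxm, ← Ideal.Quotient.mkₐ_eq_mk ℂ]
      rw [show (C a : MvPolynomial (Fin n) ℂ) = a • 1 by rw [smul_eq_C_mul, mul_one], map_smul,
        map_one]
  | add p q hp hq => rw [map_add, map_add, hp, hq]
  | mul_X p i hp =>
      have hsplit : p * X i = (X i - C (ξ i)) * p + C (ξ i) * p := by ring
      rw [hsplit, map_add, map_add, mk_C_mul, ← smul_eq_C_mul, map_smul, ← hp]
      congr 1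
      -- core: π ((X i - C ξ i) * p) = taylorMap ((X i - C ξ i) * p)
      rw [taylorMap_apply]
      have hA : ∀ γ ∈ Finset.Iic (fun _ : Fin n => o),
          ((∏ j, ((γ j).factorial : ℂ))⁻¹ *
            eval ξ (pd γ ((X i - C (ξ i)) * p))) • Ideal.Quotient.mk Q (xm ξ γ)
          = ((∏ j, ((γ j).factorial : ℂ))⁻¹ *
            ((γ i) * eval ξ (pd (γ - Pi.single i 1) p))) • Ideal.Quotient.mk Q (xm ξ γ) := by
        intro γ _
        rw [eval_pd_mul]
      rw [Finset.sum_congr rfl hA]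
      have hB : Ideal.Quotient.mk Q ((X i - C (ξ i)) * p)
          = ∑ β ∈ Finset.Iic (fun _ : Fin n => o),
            ((∏ j, ((β j).factorial : ℂ))⁻¹ * eval ξ (pd β p)) •
              Ideal.Quotient.mk Q (xm ξ (β + Pi.single i 1)) := by
        rw [mul_comm, map_mul, hp, taylorMap_apply, Finset.sum_mul]
        apply Finset.sum_congr rfl
        intro β _
        rw [smul_mul_assoc, ← map_mul, ← xm_add_single]
      rw [hB]
      set s1 := (Finset.Iic (fun _ : Fin n => o)).filter (fun β => β i < o) with hs1
      set s2 := (Finset.Iic (fun _ : Fin n => o)).filter (fun γ => 0 < γ i) with hs2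
      have hL : ∑ β ∈ s1,
            ((∏ j, ((β j).factorial : ℂ))⁻¹ * eval ξ (pd β p)) •
              Ideal.Quotient.mk Q (xm ξ (β + Pi.single i 1))
          = ∑ β ∈ Finset.Iic (fun _ : Fin n => o),
            ((∏ j, ((β j).factorial : ℂ))⁻¹ * eval ξ (pd β p)) •
              Ideal.Quotient.mk Q (xm ξ (β + Pi.single i 1)) := by
        apply Finset.sum_filter_of_ne
        intro β hβ hne
        by_contra hlt
        apply hne
        have hβo : β i = o := le_antisymm (Finset.mem_Iic.mp hβ i) (not_lt.mp hlt)
        have hmem : xm ξ (β + Pi.single i 1) ∈ Q := by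
          apply ho
          have h2 : (β + Pi.single i 1 : Fin n → ℕ) i = o + 1 := by simp [hβo]
          have h1 : o + 1 ≤ ∑ j, (β + Pi.single i 1 : Fin n → ℕ) j := by
            rw [← h2]
            exact Finset.single_le_sum (fun j _ => Nat.zero_le _) (Finset.mem_univ i)
          exact (Ideal.pow_le_pow_right h1) (xm_mem_pow ξ _)
        rw [(Ideal.Quotient.eq_zero_iff_mem).mpr hmem, smul_zero]
      have hR : ∑ γ ∈ s2,
            ((∏ j, ((γ j).factorial : ℂ))⁻¹ *
              ((γ i) * eval ξ (pd (γ - Pi.single i 1) p))) • Ideal.Quotient.mk Q (xm ξ γ)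
          = ∑ γ ∈ Finset.Iic (fun _ : Fin n => o),
            ((∏ j, ((γ j).factorial : ℂ))⁻¹ *
              ((γ i) * eval ξ (pd (γ - Pi.single i 1) p))) • Ideal.Quotient.mk Q (xm ξ γ) := by
        apply Finset.sum_filter_of_ne
        intro γ _ hne
        by_contra hlt
        apply hne
        have hγ0 : γ i = 0 := by omega
        rw [hγ0, Nat.cast_zero, zero_mul, mul_zero, zero_smul]
      rw [← hL, ← hR]
      apply Finset.sum_nbij' (i := fun β => β + Pi.single i 1)
        (j := fun γ => γ - Pi.single i 1)
      · intro β hβ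
        rw [hs1, Finset.mem_filter, Finset.mem_Iic] at hβ
        obtain ⟨hβle, hβi⟩ := hβ
        rw [hs2, Finset.mem_filter, Finset.mem_Iic]
        constructor
        · intro j
          show (β + Pi.single i 1 : Fin n → ℕ) j ≤ o
          have he : (β + Pi.single i 1 : Fin n → ℕ) j
              = β j + (Pi.single i 1 : Fin n → ℕ) j := rfl
          have hb : β j ≤ o := hβle j
          rcases eq_or_ne j i with rfl | hj
          · rw [he, Pi.single_eq_same]; omega
          · rw [he, Pi.single_eq_of_ne hj]; omega
        · show 0 < (β + Pi.single i 1 : Fin n → ℕ) i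
          have he : (β + Pi.single i 1 : Fin n → ℕ) i
              = β i + (Pi.single i 1 : Fin n → ℕ) i := rfl
          rw [he, Pi.single_eq_same]
          omega
      · intro γ hγ
        rw [hs2, Finset.mem_filter, Finset.mem_Iic] at hγ
        obtain ⟨hγle, hγi⟩ := hγ
        rw [hs1, Finset.mem_filter, Finset.mem_Iic]
        constructor
        · intro j
          show (γ - Pi.single i 1 : Fin n → ℕ) j ≤ o
          have he : (γ - Pi.single i 1 : Fin n → ℕ) j
              = γ j - (Pi.single i 1 : Fin n → ℕ) j := rfl
          have hb : γ j ≤ o := hγle j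
          rcases eq_or_ne j i with rfl | hj
          · rw [he, Pi.single_eq_same]; omega
          · rw [he, Pi.single_eq_of_ne hj]; omega
        · show (γ - Pi.single i 1 : Fin n → ℕ) i < o
          have he : (γ - Pi.single i 1 : Fin n → ℕ) i
              = γ i - (Pi.single i 1 : Fin n → ℕ) i := rfl
          have hb : γ i ≤ o := hγle i
          rw [he, Pi.single_eq_same]
          omega
      · intro β _
        funext j
        have he : (β + Pi.single i 1 - Pi.single i 1 : Fin n → ℕ) j
            = β j + (Pi.single i 1 : Fin n → ℕ) j - (Pi.single i 1 : Fin n → ℕ) j := rfl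
        rcases eq_or_ne j i with rfl | hj
        · rw [he, Pi.single_eq_same]; omega
        · rw [he, Pi.single_eq_of_ne hj]; omega
      · intro γ hγ
        rw [hs2, Finset.mem_filter] at hγ
        obtain ⟨-, hγi⟩ := hγ
        funext j
        have he : (γ - Pi.single i 1 + Pi.single i 1 : Fin n → ℕ) j
            = γ j - (Pi.single i 1 : Fin n → ℕ) j + (Pi.single i 1 : Fin n → ℕ) j := rfl
        rcases eq_or_ne j i with rfl | hj
        · rw [he, Pi.single_eq_same]; omega
        · rw [he, Pi.single_eq_of_ne hj]; omega
      · intro β hβ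
        rw [hs1, Finset.mem_filter, Finset.mem_Iic] at hβ
        have hsube : (β + Pi.single i 1 - Pi.single i 1 : Fin n → ℕ) = β := by
          funext j
          rcases eq_or_ne j i with rfl | hj
          · simp only [Pi.sub_apply, Pi.add_apply, Pi.single_eq_same]; omega
          · simp only [Pi.sub_apply, Pi.add_apply, Pi.single_eq_of_ne hj]; omega
        have hie : (β + Pi.single i 1 : Fin n → ℕ) i = β i + 1 := by
          simp
        have hfact : (∏ j, (((β + Pi.single i 1 : Fin n → ℕ) j).factorial : ℂ))
            = ((β i : ℂ) + 1) * ∏ j, ((β j).factorial : ℂ) := by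
          rw [← Finset.mul_prod_erase Finset.univ _ (Finset.mem_univ i),
            ← Finset.mul_prod_erase Finset.univ (fun j => ((β j).factorial : ℂ))
              (Finset.mem_univ i)]
          rw [hie, Nat.factorial_succ]
          push_cast
          rw [Finset.prod_congr rfl (fun j hj => by
            have hj' : j ≠ i := (Finset.mem_erase.mp hj).1
            rw [show (β + Pi.single i 1 : Fin n → ℕ) j = β j by
              simp [Pi.single_eq_of_ne hj']])]
          ring
        rw [hsube, hie, hfact]
        have hne : ((β i : ℂ) + 1) ≠ 0 := Nat.cast_add_one_ne_zero (β i)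
        congr 1
        rw [mul_inv]
        push_cast
        rw [mul_mul_mul_comm, inv_mul_cancel₀ hne, one_mul]

end Taylor

section Final

variable {n : ℕ}

lemma mulLeft_ofFn_prod {S : Type*} [CommRing S] [Algebra ℂ S] :
    ∀ {m : ℕ} (b : Fin m → S),
      (List.ofFn fun i => (LinearMap.mulLeft ℂ (b i) : Module.End ℂ S)).prod
        = LinearMap.mulLeft ℂ (∏ i, b i) := by
  intro m
  induction m with
  | zero => intro b; simp [LinearMap.mulLeft_one, Module.End.one_eq_id]
  | succ m ih =>
      intro b
      rw [List.ofFn_succ, List.prod_cons, Fin.prod_univ_succ]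
      rw [show (List.ofFn fun i : Fin m => (LinearMap.mulLeft ℂ (b i.succ) : Module.End ℂ S))
          = List.ofFn fun i : Fin m => (LinearMap.mulLeft ℂ ((fun j => b j.succ) i)
            : Module.End ℂ S) from rfl, ih (fun j => b j.succ)]
      rw [LinearMap.mulLeft_mul, Module.End.mul_eq_comp]

lemma multPow_apply_one (ξ : Fin n → ℂ) (Q : Ideal (MvPolynomial (Fin n) ℂ))
    (γ : Fin n → ℕ) :
    multPow ξ Q γ (Ideal.Quotient.mk Q 1) = Ideal.Quotient.mk Q (xm ξ γ) := by
  unfold multPow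
  have h1 : (List.ofFn fun i : Fin n =>
      (LinearMap.mulLeft ℂ (Ideal.Quotient.mk Q (X i - C (ξ i))) :
        Module.End ℂ (MvPolynomial (Fin n) ℂ ⧸ Q)) ^ (γ i))
      = List.ofFn fun i : Fin n =>
        (LinearMap.mulLeft ℂ ((Ideal.Quotient.mk Q (X i - C (ξ i))) ^ (γ i)) :
          Module.End ℂ (MvPolynomial (Fin n) ℂ ⧸ Q)) := by
    congr 1
    funext i
    rw [LinearMap.pow_mulLeft]
  rw [h1, mulLeft_ofFn_prod, LinearMap.mulLeft_apply, map_one, mul_one]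
  rw [show xm ξ γ = ∏ i, (X i - C (ξ i)) ^ (γ i) from rfl, map_prod]
  apply Finset.prod_congr rfl
  intro i _
  rw [map_pow]

end Final

/-- The normal form satisfies `N(p) = p(M)(1) = Σ_k Λ_k(p)·(x−ξ)^{α_{k+1}}`, where
`p(M) = Σ_γ (1/γ!)∂^γ(p)(ξ)·M^γ` is obtained by substituting the (nilpotent, commuting)
multiplication operators `M_i` for `x_i − ξ_i` in the Taylor expansion of `p` at `ξ`
(a finite sum since `M^γ = 0` for `|γ| > o`). -/
theorem normal_form_eq_pM_one {n δ : ℕ} (ξ : Fin n → ℂ)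
    (Q : Ideal (MvPolynomial (Fin n) ℂ))
    (hprim : Q.IsPrimary)
    (hrad : Q.radical = RingHom.ker (MvPolynomial.eval ξ))
    (o : ℕ) (ho : (RingHom.ker (MvPolynomial.eval ξ)) ^ (o + 1) ≤ Q)
    (α : Fin δ → (Fin n → ℕ)) (Λ : Fin δ → Module.Dual ℂ (MvPolynomial (Fin n) ℂ))
    (hperp : ∀ j, Λ j ∈ perp Q)
    (hdual : ∀ j k, Λ j (xm ξ (α k)) = if j = k then 1 else 0)
    (hbasis : Submodule.span ℂ (Set.range fun k => Ideal.Quotient.mk Q (xm ξ (α k))) = ⊤)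
    (p : MvPolynomial (Fin n) ℂ) :
    (∑ γ ∈ Finset.Iic (fun _ : Fin n => o),
        ((∏ i, ((γ i).factorial : ℂ))⁻¹ * MvPolynomial.eval ξ (pd γ p)) •
          multPow ξ Q γ (Ideal.Quotient.mk Q 1)) =
      ∑ k, Λ k p • Ideal.Quotient.mk Q (xm ξ (α k)) ∧
    Ideal.Quotient.mk Q p = ∑ k, Λ k p • Ideal.Quotient.mk Q (xm ξ (α k)) := by
  -- step 1: the Taylor sum equals `mk p`
  have hstep1 : (∑ γ ∈ Finset.Iic (fun _ : Fin n => o),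
      ((∏ i, ((γ i).factorial : ℂ))⁻¹ * MvPolynomial.eval ξ (pd γ p)) •
        multPow ξ Q γ (Ideal.Quotient.mk Q 1)) = Ideal.Quotient.mk Q p := by
    rw [taylor_mod ξ Q o ho p, taylorMap_apply]
    apply Finset.sum_congr rfl
    intro γ _
    rw [multPow_apply_one]
  -- step 2: `mk p` equals the dual expansion
  have hstep2 : Ideal.Quotient.mk Q p = ∑ k, Λ k p • Ideal.Quotient.mk Q (xm ξ (α k)) := by
    have hmem : Ideal.Quotient.mk Q p ∈
        Submodule.span ℂ (Set.range fun k => Ideal.Quotient.mk Q (xm ξ (α k))) := by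
      rw [hbasis]; exact Submodule.mem_top
    rw [Submodule.mem_span_range_iff_exists_fun] at hmem
    obtain ⟨c, hc⟩ := hmem
    have hq : Ideal.Quotient.mk Q (∑ k, c k • xm ξ (α k)) = Ideal.Quotient.mk Q p := by
      rw [← Ideal.Quotient.mkₐ_eq_mk ℂ, map_sum]
      simp_rw [map_smul]
      rw [Ideal.Quotient.mkₐ_eq_mk ℂ]
      exact hc
    have hQmem : (∑ k, c k • xm ξ (α k)) - p ∈ Q := by
      rw [← Ideal.Quotient.eq]
      exact hq
    have hcoef : ∀ j, Λ j p = c j := by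
      intro j
      have hzero : Λ j ((∑ k, c k • xm ξ (α k)) - p) = 0 := by
        have := hperp j
        unfold perp at this
        rw [Submodule.mem_dualAnnihilator] at this
        exact this _ (by simpa using hQmem)
      rw [map_sub] at hzero
      have hsum : Λ j (∑ k, c k • xm ξ (α k)) = c j := by
        rw [map_sum]
        simp_rw [map_smul, hdual, smul_eq_mul]
        rw [Finset.sum_congr rfl (fun k _ => by rw [mul_ite, mul_one, mul_zero]),
          Finset.sum_ite_eq]
        simp
      rw [hsum] at hzero
      exact (sub_eq_zero.mp hzero).symm
    rw [← hc]
    apply Finset.sum_congr rfl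
    intro k _
    rw [hcoef k]
  exact ⟨hstep1.trans hstep2, hstep2⟩
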